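/- The atomic weight of a sum of partizan games is the sum of their atomic weights: AW(G + H) = AW(G) + AW(H), whenever both atomic weights exist (in particular for all all-small games). -/

import Mathlib

namespace SetTheory

/-- Port of the pre-2025 Mathlib `SetTheory.PGame` (removed from Mathlib). -/
inductive PGame : Type (u + 1)
  | mk : ∀ α β : Type u, (α → PGame) → (β → PGame) → PGame

namespace PGame

/-- `Imm y x`: `y` is an immediate option of `x`. -/
inductive Imm : PGame.{u} → PGame.{u} → Prop
  | left (xl xr : Type u) (xL : xl → PGame.{u}) (xR : xr → PGame.{u}) (i : xl) :
      Imm (xL i) (mk xl xr xL xR)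
  | right (xl xr : Type u) (xL : xl → PGame.{u}) (xR : xr → PGame.{u}) (j : xr) :
      Imm (xR j) (mk xl xr xL xR)

theorem imm_wf : WellFounded Imm.{u} :=
  ⟨fun x => by
    induction x with
    | mk xl xr xL xR ihl ihr =>
      exact Acc.intro _ (fun y h => by
        cases h with
        | left _ _ _ _ i => exact ihl i
        | right _ _ _ _ j => exact ihr j)⟩

instance : WellFoundedRelation PGame.{u} := ⟨Imm, imm_wf⟩

/-- Simultaneous definition of `≤` (first component) and `⧏` (second component). -/
def leLF : PGame.{u} → PGame.{u} → Prop × Prop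
  | mk xl xr xL xR, mk yl yr yL yR =>
    ((∀ i, (leLF (xL i) (mk yl yr yL yR)).2) ∧ ∀ j, (leLF (mk xl xr xL xR) (yR j)).2,
     (∃ i, (leLF (mk xl xr xL xR) (yL i)).1) ∨ ∃ j, (leLF (xR j) (mk yl yr yL yR)).1)
termination_by x y => (x, y)
decreasing_by
  all_goals first
    | exact Prod.Lex.left _ _ (Imm.left _ _ _ _ _)
    | exact Prod.Lex.right _ (Imm.left _ _ _ _ _)
    | exact Prod.Lex.left _ _ (Imm.right _ _ _ _ _)
    | exact Prod.Lex.right _ (Imm.right _ _ _ _ _)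

instance : LE PGame.{u} := ⟨fun x y => (leLF x y).1⟩

/-- `x ⧏ y` means `¬ y ≤ x` (Left wins `y - x` moving first). -/
def LF (x y : PGame.{u}) : Prop := ¬y ≤ x

infixl:50 " ⧏ " => PGame.LF

instance : Zero PGame.{u} := ⟨⟨PEmpty, PEmpty, PEmpty.elim, PEmpty.elim⟩⟩

instance : One PGame.{u} := ⟨⟨PUnit, PEmpty, fun _ => 0, PEmpty.elim⟩⟩

/-- The negation of a game. -/
def neg : PGame.{u} → PGame.{u}
  | ⟨l, r, L, R⟩ => ⟨r, l, fun i => neg (R i), fun i => neg (L i)⟩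

instance : Neg PGame.{u} := ⟨neg⟩

/-- The sum of two games. -/
def add : PGame.{u} → PGame.{u} → PGame.{u}
  | mk xl xr xL xR, mk yl yr yL yR =>
    mk (xl ⊕ yl) (xr ⊕ yr)
      (Sum.elim (fun i => add (xL i) (mk yl yr yL yR)) (fun i => add (mk xl xr xL xR) (yL i)))
      (Sum.elim (fun i => add (xR i) (mk yl yr yL yR)) (fun i => add (mk xl xr xL xR) (yR i)))
termination_by x y => (x, y)
decreasing_by
  all_goals first
    | exact Prod.Lex.left _ _ (Imm.left _ _ _ _ _)
    | exact Prod.Lex.right _ (Imm.left _ _ _ _ _)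
    | exact Prod.Lex.left _ _ (Imm.right _ _ _ _ _)
    | exact Prod.Lex.right _ (Imm.right _ _ _ _ _)

instance : Add PGame.{u} := ⟨add⟩

/-- The game `* = {0 | 0}`. -/
def star : PGame.{u} := ⟨PUnit, PUnit, fun _ => 0, fun _ => 0⟩

/-- The nim-heap of ordinal size `o`. -/
noncomputable def nim (o : Ordinal.{u}) : PGame.{u} :=
  ⟨o.ToType, o.ToType, fun x => nim (Ordinal.ToType.mk.symm x).val,
    fun x => nim (Ordinal.ToType.mk.symm x).val⟩
termination_by o
decreasing_by all_goals exact (Ordinal.ToType.mk.symm x).prop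

end PGame

end SetTheory

open SetTheory PGame

namespace MixedDeletion

/-- The degree of a vertex `v` with respect to an edge set `E`. -/
def deg (E : Finset (Sym2 ℕ)) (v : ℕ) : ℕ := (E.filter (fun e => v ∈ e)).card

/-- The graph position with vertex set `V` and edge set `E` has no isolated vertex. -/
def NoIsol (V : Finset ℕ) (E : Finset (Sym2 ℕ)) : Prop := ∀ v ∈ V, 0 < deg E v

/-- Result of Left deleting the vertex `v`: remove `v` and all incident edges. -/
def delV (V : Finset ℕ) (E : Finset (Sym2 ℕ)) (v : ℕ) : Finset ℕ × Finset (Sym2 ℕ) :=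
  (V.erase v, E.filter (fun e => v ∉ e))

/-- Left may legally delete vertex `v` under the base (Classic) rules:
`v` is a vertex and the deletion creates no isolated vertex. -/
def LeftOK (V : Finset ℕ) (E : Finset (Sym2 ℕ)) (v : ℕ) : Prop :=
  v ∈ V ∧ NoIsol (V.erase v) (E.filter (fun e => v ∉ e))

/-- Right may legally delete edge `e` under the base (Classic) rules:
`e` is an edge and the deletion creates no isolated vertex. -/
def RightOK (V : Finset ℕ) (E : Finset (Sym2 ℕ)) (e : Sym2 ℕ) : Prop :=
  e ∈ E ∧ NoIsol V (E.erase e)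

/-- The Classic Variant of the Mixed Deletion Game, as a partizan game:
Left deletes a vertex (and incident edges), Right deletes an edge,
and no move may create an isolated vertex. -/
def classicG : Finset ℕ → Finset (Sym2 ℕ) → PGame
  | V, E =>
    PGame.mk {v : ℕ // LeftOK V E v} {e : Sym2 ℕ // RightOK V E e}
      (fun x => classicG (V.erase x.val) (E.filter (fun e => x.val ∉ e)))
      (fun x => classicG V (E.erase x.val))
  termination_by V E => V.card + E.card
  decreasing_by
  · have h1 : (V.erase x.val).card < V.card := Finset.card_erase_lt_of_mem x.2.1
    have h2 : (E.filter (fun e => x.val ∉ e)).card ≤ E.card := Finset.card_filter_le _ _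
    omega
  · have h1 : (E.erase x.val).card < E.card := Finset.card_erase_lt_of_mem x.2.1
    omega

/-- The Forbidden Leaf Variant: as the Classic Variant, but Left may not
delete leaf vertices (vertices of degree one). -/
def flG : Finset ℕ → Finset (Sym2 ℕ) → PGame
  | V, E =>
    PGame.mk {v : ℕ // LeftOK V E v ∧ deg E v ≠ 1} {e : Sym2 ℕ // RightOK V E e}
      (fun x => flG (V.erase x.val) (E.filter (fun e => x.val ∉ e)))
      (fun x => flG V (E.erase x.val))
  termination_by V E => V.card + E.card
  decreasing_by
  · have h1 : (V.erase x.val).card < V.card := Finset.card_erase_lt_of_mem x.2.1.1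
    have h2 : (E.filter (fun e => x.val ∉ e)).card ≤ E.card := Finset.card_filter_le _ _
    omega
  · have h1 : (E.erase x.val).card < E.card := Finset.card_erase_lt_of_mem x.2.1
    omega

/-- The Mutual Failures Variant: as the Classic Variant, but in any graph
position a player has a legal move if and only if the opponent does; i.e. a
base-rules move is legal only if the opponent also has a base-rules move. -/
def mfG : Finset ℕ → Finset (Sym2 ℕ) → PGame
  | V, E =>
    PGame.mk {v : ℕ // LeftOK V E v ∧ ∃ e, RightOK V E e}
      {e : Sym2 ℕ // RightOK V E e ∧ ∃ v, LeftOK V E v}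
      (fun x => mfG (V.erase x.val) (E.filter (fun e => x.val ∉ e)))
      (fun x => mfG V (E.erase x.val))
  termination_by V E => V.card + E.card
  decreasing_by
  · have h1 : (V.erase x.val).card < V.card := Finset.card_erase_lt_of_mem x.2.1.1
    have h2 : (E.filter (fun e => x.val ∉ e)).card ≤ E.card := Finset.card_filter_le _ _
    omega
  · have h1 : (E.erase x.val).card < E.card := Finset.card_erase_lt_of_mem x.2.1.1
    omega

/-- Edge set of the path graph on vertices `0, 1, …, n-1`. -/
def pathE (n : ℕ) : Finset (Sym2 ℕ) := (Finset.range (n - 1)).image (fun i => s(i, i + 1))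

/-- Edge set of the cycle graph on vertices `0, 1, …, n-1`. -/
def cycleE (n : ℕ) : Finset (Sym2 ℕ) := (Finset.range n).image (fun i => s(i, (i + 1) % n))

/-- Edge set of the complete graph on vertices `0, 1, …, n-1`. -/
def completeE (n : ℕ) : Finset (Sym2 ℕ) := (Finset.range n).sym2.filter (fun e => ¬ e.IsDiag)

/-- The path position `P_n` in the Classic Variant. -/
def classicPath (n : ℕ) : PGame := classicG (Finset.range n) (pathE n)

/-- The cycle position `C_n` in the Classic Variant. -/
def classicCycle (n : ℕ) : PGame := classicG (Finset.range n) (cycleE n)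

/-- The complete graph position `K_n` in the Classic Variant. -/
def classicComplete (n : ℕ) : PGame := classicG (Finset.range n) (completeE n)

/-- The path position `P_n` in the Forbidden Leaf Variant. -/
def flPath (n : ℕ) : PGame := flG (Finset.range n) (pathE n)

/-- The cycle position `C_n` in the Forbidden Leaf Variant. -/
def flCycle (n : ℕ) : PGame := flG (Finset.range n) (cycleE n)

/-- The complete graph position `K_n` in the Forbidden Leaf Variant. -/
def flComplete (n : ℕ) : PGame := flG (Finset.range n) (completeE n)

/-- The path position `P_n` in the Mutual Failures Variant. -/
def mfPath (n : ℕ) : PGame := mfG (Finset.range n) (pathE n)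

/-- The cycle position `C_n` in the Mutual Failures Variant. -/
def mfCycle (n : ℕ) : PGame := mfG (Finset.range n) (cycleE n)

/-- The complete graph position `K_n` in the Mutual Failures Variant. -/
def mfComplete (n : ℕ) : PGame := mfG (Finset.range n) (completeE n)

/-- The partizan game equal to a natural number `n`. -/
def natPG : ℕ → PGame
  | 0 => 0
  | n + 1 => natPG n + 1

/-- The partizan game equal to an integer `z`. -/
def intPG (z : ℤ) : PGame := if 0 ≤ z then natPG z.toNat else -natPG (-z).toNat

/-- The game up, `↑ = {0 | *}`. -/
def up : PGame := PGame.mk PUnit PUnit (fun _ => 0) (fun _ => star)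

/-- The game down, `↓ = {* | 0}`. -/
def down : PGame := -up

/-- The sum of `n` copies of up. -/
def natUp : ℕ → PGame
  | 0 => 0
  | n + 1 => natUp n + up

/-- The game `z·↑`: `|z|` copies of up if `z ≥ 0`, and `|z|` copies of down otherwise. -/
def zUp (z : ℤ) : PGame := if 0 ≤ z then natUp z.toNat else -natUp (-z).toNat

/-- Two games have the same outcome: Left wins moving first in one iff in the other,
and Right wins moving first in one iff in the other. -/
def SameOutcome (A B : PGame) : Prop := (0 ⧏ A ↔ 0 ⧏ B) ∧ (A ⧏ 0 ↔ B ⧏ 0)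

/-- Far-star equivalence: `G + X + ✶` and `H + X + ✶` have the same outcome for
every game `X`, where `✶` (far star) is any nim-heap `*k` with `k ≥ 2`. -/
def FarStarEquiv (G H : PGame) : Prop :=
  ∀ (X : PGame) (k : ℕ), 2 ≤ k → SameOutcome (G + X + nim k) (H + X + nim k)

/-- `G` has atomic weight `z` if `G` is far-star equivalent to `z·↑`. -/
def AtomicWeight (G : PGame) (z : ℤ) : Prop := FarStarEquiv G (zUp z)

/-- A game is all-small if in every subposition Left has a move iff Right has a move. -/
def AllSmall : PGame → Prop
  | PGame.mk l r L R =>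
    (Nonempty l ↔ Nonempty r) ∧ (∀ i, AllSmall (L i)) ∧ (∀ j, AllSmall (R j))


def IsL : PGame.{u} → PGame.{u} → Prop
  | y, PGame.mk _ _ L _ => ∃ i, L i = y

def IsR : PGame.{u} → PGame.{u} → Prop
  | y, PGame.mk _ _ _ R => ∃ j, R j = y

theorem isL_mk_iff {z : PGame.{u}} {l r : Type u} {L : l → PGame.{u}} {R : r → PGame.{u}} :
    IsL z (PGame.mk l r L R) ↔ ∃ i, L i = z := Iff.rfl

theorem isR_mk_iff {z : PGame.{u}} {l r : Type u} {L : l → PGame.{u}} {R : r → PGame.{u}} :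
    IsR z (PGame.mk l r L R) ↔ ∃ j, R j = z := Iff.rfl

theorem isL_of {l r : Type u} {L : l → PGame.{u}} {R : r → PGame.{u}} (i : l) :
    IsL (L i) (PGame.mk l r L R) := isL_mk_iff.2 ⟨i, rfl⟩

theorem isR_of {l r : Type u} {L : l → PGame.{u}} {R : r → PGame.{u}} (j : r) :
    IsR (R j) (PGame.mk l r L R) := isR_mk_iff.2 ⟨j, rfl⟩

theorem pg_lf_aux (x y : PGame.{u}) :
    ((leLF x y).2 ↔ ¬ (leLF y x).1) ∧ ((leLF y x).2 ↔ ¬ (leLF x y).1) := by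
  induction x generalizing y with
  | mk xl xr xL xR ihxl ihxr =>
  induction y with
  | mk yl yr yL yR ihyl ihyr =>
  have a1 : ∀ i, (leLF (yL i) (PGame.mk xl xr xL xR)).2 ↔
      ¬ (leLF (PGame.mk xl xr xL xR) (yL i)).1 := fun i => (ihyl i).2
  have a2 : ∀ j, (leLF (PGame.mk yl yr yL yR) (xR j)).2 ↔
      ¬ (leLF (xR j) (PGame.mk yl yr yL yR)).1 := fun j => (ihxr j _).2
  have a3 : ∀ i, (leLF (xL i) (PGame.mk yl yr yL yR)).2 ↔
      ¬ (leLF (PGame.mk yl yr yL yR) (xL i)).1 := fun i => (ihxl i _).1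
  have a4 : ∀ j, (leLF (PGame.mk xl xr xL xR) (yR j)).2 ↔
      ¬ (leLF (yR j) (PGame.mk xl xr xL xR)).1 := fun j => (ihyr j).1
  rw [leLF.eq_1, leLF.eq_1]
  simp only [a1, a2, a3, a4, not_and_or, not_forall, not_not, and_self]

theorem pg_le_mk {xl xr : Type u} {xL : xl → PGame.{u}} {xR : xr → PGame.{u}}
    {yl yr : Type u} {yL : yl → PGame.{u}} {yR : yr → PGame.{u}} :
    PGame.mk xl xr xL xR ≤ PGame.mk yl yr yL yR ↔
      (∀ i, ¬ PGame.mk yl yr yL yR ≤ xL i) ∧ ∀ j, ¬ yR j ≤ PGame.mk xl xr xL xR := by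
  show (leLF _ _).1 ↔ _
  rw [leLF.eq_1]
  exact and_congr (forall_congr' fun i => (pg_lf_aux _ _).1)
    (forall_congr' fun j => (pg_lf_aux _ _).1)

theorem pg_le_iff (x y : PGame.{u}) :
    x ≤ y ↔ (∀ x', IsL x' x → ¬ y ≤ x') ∧ ∀ y', IsR y' y → ¬ y' ≤ x := by
  cases x with
  | mk xl xr xL xR =>
  cases y with
  | mk yl yr yL yR =>
  rw [pg_le_mk]
  constructor
  · rintro ⟨h1, h2⟩
    refine ⟨fun x' hx' => ?_, fun y' hy' => ?_⟩
    · obtain ⟨i, rfl⟩ := isL_mk_iff.1 hx'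
      exact h1 i
    · obtain ⟨j, rfl⟩ := isR_mk_iff.1 hy'
      exact h2 j
  · rintro ⟨h1, h2⟩
    exact ⟨fun i => h1 _ (isL_of i), fun j => h2 _ (isR_of j)⟩

theorem pg_not_le (x y : PGame.{u}) :
    ¬ y ≤ x ↔ (∃ y', IsL y' y ∧ x ≤ y') ∨ ∃ x', IsR x' x ∧ x' ≤ y := by
  rw [pg_le_iff]
  simp only [not_and_or, not_forall, _root_.not_imp, not_not, exists_prop]

theorem pg_le_refl (x : PGame.{u}) : x ≤ x := by
  induction x with
  | mk xl xr xL xR ihl ihr =>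
    rw [pg_le_mk]
    refine ⟨fun i h => ?_, fun j h => ?_⟩
    · exact ((pg_le_iff _ _).1 h).1 _ (isL_of i) (ihl i)
    · exact ((pg_le_iff _ _).1 h).2 _ (isR_of j) (ihr j)

theorem pg_le_trans_aux (x y z : PGame.{u}) :
    (x ≤ y → y ≤ z → x ≤ z) ∧ (y ≤ z → z ≤ x → y ≤ x) ∧ (z ≤ x → x ≤ y → z ≤ y) := by
  induction x generalizing y z with
  | mk xl xr xL xR ihxl ihxr =>
  induction y generalizing z with
  | mk yl yr yL yR ihyl ihyr =>
  induction z with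
  | mk zl zr zL zR ihzl ihzr =>
  refine ⟨fun h1 h2 => ?_, fun h1 h2 => ?_, fun h1 h2 => ?_⟩
  · rw [pg_le_iff]
    refine ⟨fun x' hx' h3 => ?_, fun z' hz' h3 => ?_⟩
    · obtain ⟨i, rfl⟩ := isL_mk_iff.1 hx'
      exact ((pg_le_iff _ _).1 h1).1 _ hx' ((ihxl i _ _).2.1 h2 h3)
    · obtain ⟨j, rfl⟩ := isR_mk_iff.1 hz'
      exact ((pg_le_iff _ _).1 h2).2 _ hz' ((ihzr j).2.2 h3 h1)
  · rw [pg_le_iff]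
    refine ⟨fun y' hy' h3 => ?_, fun x' hx' h3 => ?_⟩
    · obtain ⟨i, rfl⟩ := isL_mk_iff.1 hy'
      exact ((pg_le_iff _ _).1 h1).1 _ hy' ((ihyl i _).2.2 h2 h3)
    · obtain ⟨j, rfl⟩ := isR_mk_iff.1 hx'
      exact ((pg_le_iff _ _).1 h2).2 _ hx' ((ihxr j _ _).1 h3 h1)
  · rw [pg_le_iff]
    refine ⟨fun z' hz' h3 => ?_, fun y' hy' h3 => ?_⟩
    · obtain ⟨i, rfl⟩ := isL_mk_iff.1 hz'
      exact ((pg_le_iff _ _).1 h1).1 _ hz' ((ihzl i).1 h2 h3)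
    · obtain ⟨j, rfl⟩ := isR_mk_iff.1 hy'
      exact ((pg_le_iff _ _).1 h2).2 _ hy' ((ihyr j _).2.1 h3 h1)

theorem pg_le_trans {x y z : PGame.{u}} (h1 : x ≤ y) (h2 : y ≤ z) : x ≤ z :=
  (pg_le_trans_aux x y z).1 h1 h2

theorem pg_lf_of_isL {x' x : PGame.{u}} (h : IsL x' x) : ¬ x ≤ x' :=
  fun h' => ((pg_le_iff _ _).1 h').1 _ h (pg_le_refl _)

theorem pg_lf_of_isR {x' x : PGame.{u}} (h : IsR x' x) : ¬ x' ≤ x :=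
  fun h' => ((pg_le_iff _ _).1 h').2 _ h (pg_le_refl _)

theorem lf_helper {T o o' : PGame.{u}} (ho' : IsL o' T) (h : o ≤ o') : ¬ T ≤ o :=
  fun hle => pg_lf_of_isL ho' (pg_le_trans hle h)

theorem rf_helper {T o o' : PGame.{u}} (ho' : IsR o' T) (h : o' ≤ o) : ¬ o ≤ T :=
  fun hle => pg_lf_of_isR ho' (pg_le_trans h hle)

theorem not_isL_zero {z : PGame.{u}} : ¬ IsL z 0 := by
  intro h
  change IsL z (PGame.mk PEmpty PEmpty PEmpty.elim PEmpty.elim) at h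
  obtain ⟨i, _⟩ := isL_mk_iff.1 h
  exact i.elim

theorem not_isR_zero {z : PGame.{u}} : ¬ IsR z 0 := by
  intro h
  change IsR z (PGame.mk PEmpty PEmpty PEmpty.elim PEmpty.elim) at h
  obtain ⟨i, _⟩ := isR_mk_iff.1 h
  exact i.elim

theorem isL_add {z x y : PGame.{u}} :
    IsL z (x + y) ↔ (∃ x', IsL x' x ∧ z = x' + y) ∨ ∃ y', IsL y' y ∧ z = x + y' := by
  cases x with
  | mk xl xr xL xR =>
  cases y with
  | mk yl yr yL yR =>
  show IsL z (SetTheory.PGame.add _ _) ↔ _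
  rw [SetTheory.PGame.add.eq_1]
  constructor
  · intro h
    obtain ⟨i | i, rfl⟩ := isL_mk_iff.1 h
    · exact Or.inl ⟨_, isL_of i, rfl⟩
    · exact Or.inr ⟨_, isL_of i, rfl⟩
  · rintro (⟨_, hx, rfl⟩ | ⟨_, hy, rfl⟩)
    · obtain ⟨i, rfl⟩ := isL_mk_iff.1 hx
      exact isL_mk_iff.2 ⟨Sum.inl i, rfl⟩
    · obtain ⟨i, rfl⟩ := isL_mk_iff.1 hy
      exact isL_mk_iff.2 ⟨Sum.inr i, rfl⟩

theorem isR_add {z x y : PGame.{u}} :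
    IsR z (x + y) ↔ (∃ x', IsR x' x ∧ z = x' + y) ∨ ∃ y', IsR y' y ∧ z = x + y' := by
  cases x with
  | mk xl xr xL xR =>
  cases y with
  | mk yl yr yL yR =>
  show IsR z (SetTheory.PGame.add _ _) ↔ _
  rw [SetTheory.PGame.add.eq_1]
  constructor
  · intro h
    obtain ⟨i | i, rfl⟩ := isR_mk_iff.1 h
    · exact Or.inl ⟨_, isR_of i, rfl⟩
    · exact Or.inr ⟨_, isR_of i, rfl⟩
  · rintro (⟨_, hx, rfl⟩ | ⟨_, hy, rfl⟩)
    · obtain ⟨i, rfl⟩ := isR_mk_iff.1 hx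
      exact isR_mk_iff.2 ⟨Sum.inl i, rfl⟩
    · obtain ⟨i, rfl⟩ := isR_mk_iff.1 hy
      exact isR_mk_iff.2 ⟨Sum.inr i, rfl⟩

theorem isL_add_left {x' x y : PGame.{u}} (h : IsL x' x) : IsL (x' + y) (x + y) :=
  isL_add.2 (Or.inl ⟨x', h, rfl⟩)

theorem isL_add_right {y' x y : PGame.{u}} (h : IsL y' y) : IsL (x + y') (x + y) :=
  isL_add.2 (Or.inr ⟨y', h, rfl⟩)

theorem isR_add_left {x' x y : PGame.{u}} (h : IsR x' x) : IsR (x' + y) (x + y) :=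
  isR_add.2 (Or.inl ⟨x', h, rfl⟩)

theorem isR_add_right {y' x y : PGame.{u}} (h : IsR y' y) : IsR (x + y') (x + y) :=
  isR_add.2 (Or.inr ⟨y', h, rfl⟩)

theorem pg_add_comm_le (x y : PGame.{u}) : x + y ≤ y + x := by
  induction x generalizing y with
  | mk xl xr xL xR ihxl ihxr =>
  induction y with
  | mk yl yr yL yR ihyl ihyr =>
  rw [pg_le_iff]
  refine ⟨fun z hz => ?_, fun w hw => ?_⟩
  · rcases isL_add.1 hz with ⟨x', hx', rfl⟩ | ⟨y', hy', rfl⟩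
    · obtain ⟨i, rfl⟩ := isL_mk_iff.1 hx'
      exact lf_helper (isL_add_right hx') (ihxl i _)
    · obtain ⟨i, rfl⟩ := isL_mk_iff.1 hy'
      exact lf_helper (isL_add_left hy') (ihyl i)
  · rcases isR_add.1 hw with ⟨y', hy', rfl⟩ | ⟨x', hx', rfl⟩
    · obtain ⟨j, rfl⟩ := isR_mk_iff.1 hy'
      exact rf_helper (isR_add_right hy') (ihyr j)
    · obtain ⟨j, rfl⟩ := isR_mk_iff.1 hx'
      exact rf_helper (isR_add_left hx') (ihxr j _)

theorem pg_add_mono_aux (x x' y : PGame.{u}) :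
    (x ≤ x' → x + y ≤ x' + y) ∧ (¬ x' ≤ x → ¬ x' + y ≤ x + y) := by
  induction x generalizing x' y with
  | mk xl xr xL xR ihxl ihxr =>
  induction x' generalizing y with
  | mk al ar aL aR ihal ihar =>
  induction y with
  | mk yl yr yL yR ihyl ihyr =>
  constructor
  · intro h
    rw [pg_le_iff]
    refine ⟨fun z hz => ?_, fun w hw => ?_⟩
    · rcases isL_add.1 hz with ⟨x'', hx'', rfl⟩ | ⟨y', hy', rfl⟩
      · obtain ⟨i, rfl⟩ := isL_mk_iff.1 hx''
        exact (ihxl i _ _).2 (((pg_le_iff _ _).1 h).1 _ hx'')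
      · obtain ⟨i, rfl⟩ := isL_mk_iff.1 hy'
        exact fun hle => pg_lf_of_isL (isL_add_right hy') (pg_le_trans hle ((ihyl i).1 h))
    · rcases isR_add.1 hw with ⟨a', ha', rfl⟩ | ⟨y', hy', rfl⟩
      · obtain ⟨j, rfl⟩ := isR_mk_iff.1 ha'
        exact (ihar j _).2 (((pg_le_iff _ _).1 h).2 _ ha')
      · obtain ⟨j, rfl⟩ := isR_mk_iff.1 hy'
        exact fun hle => pg_lf_of_isR (isR_add_right hy') (pg_le_trans ((ihyr j).1 h) hle)
  · intro h
    rcases (pg_not_le _ _).1 h with ⟨a', ha', hle'⟩ | ⟨x'', hx'', hle'⟩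
    · obtain ⟨i, rfl⟩ := isL_mk_iff.1 ha'
      exact lf_helper (isL_add_left ha') ((ihal i _).1 hle')
    · obtain ⟨j, rfl⟩ := isR_mk_iff.1 hx''
      exact rf_helper (isR_add_left hx'') ((ihxr j _ _).1 hle')

theorem pg_add_le_add_right {x x' : PGame.{u}} (y : PGame.{u}) (h : x ≤ x') : x + y ≤ x' + y :=
  (pg_add_mono_aux x x' y).1 h

theorem pg_add_le_add_left {y y' : PGame.{u}} (x : PGame.{u}) (h : y ≤ y') : x + y ≤ x + y' :=
  pg_le_trans (pg_add_comm_le x y) (pg_le_trans (pg_add_le_add_right x h) (pg_add_comm_le y' x))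

theorem pg_add_assoc_aux (x y z : PGame.{u}) :
    (x + y) + z ≤ x + (y + z) ∧ x + (y + z) ≤ (x + y) + z := by
  induction x generalizing y z with
  | mk xl xr xL xR ihxl ihxr =>
  induction y generalizing z with
  | mk yl yr yL yR ihyl ihyr =>
  induction z with
  | mk zl zr zL zR ihzl ihzr =>
  constructor
  · rw [pg_le_iff]
    refine ⟨fun t ht => ?_, fun t ht => ?_⟩
    · rcases isL_add.1 ht with ⟨s, hs, rfl⟩ | ⟨z', hz', rfl⟩
      · rcases isL_add.1 hs with ⟨x', hx', rfl⟩ | ⟨y', hy', rfl⟩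
        · obtain ⟨i, rfl⟩ := isL_mk_iff.1 hx'
          exact lf_helper (isL_add_left hx') (ihxl i _ _).1
        · obtain ⟨i, rfl⟩ := isL_mk_iff.1 hy'
          exact lf_helper (isL_add_right (isL_add_left hy')) (ihyl i _).1
      · obtain ⟨i, rfl⟩ := isL_mk_iff.1 hz'
        exact lf_helper (isL_add_right (isL_add_right hz')) (ihzl i).1
    · rcases isR_add.1 ht with ⟨x', hx', rfl⟩ | ⟨s, hs, rfl⟩
      · obtain ⟨j, rfl⟩ := isR_mk_iff.1 hx'
        exact rf_helper (isR_add_left (isR_add_left hx')) (ihxr j _ _).1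
      · rcases isR_add.1 hs with ⟨y', hy', rfl⟩ | ⟨z', hz', rfl⟩
        · obtain ⟨j, rfl⟩ := isR_mk_iff.1 hy'
          exact rf_helper (isR_add_left (isR_add_right hy')) (ihyr j _).1
        · obtain ⟨j, rfl⟩ := isR_mk_iff.1 hz'
          exact rf_helper (isR_add_right hz') (ihzr j).1
  · rw [pg_le_iff]
    refine ⟨fun t ht => ?_, fun t ht => ?_⟩
    · rcases isL_add.1 ht with ⟨x', hx', rfl⟩ | ⟨s, hs, rfl⟩
      · obtain ⟨i, rfl⟩ := isL_mk_iff.1 hx'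
        exact lf_helper (isL_add_left (isL_add_left hx')) (ihxl i _ _).2
      · rcases isL_add.1 hs with ⟨y', hy', rfl⟩ | ⟨z', hz', rfl⟩
        · obtain ⟨i, rfl⟩ := isL_mk_iff.1 hy'
          exact lf_helper (isL_add_left (isL_add_right hy')) (ihyl i _).2
        · obtain ⟨i, rfl⟩ := isL_mk_iff.1 hz'
          exact lf_helper (isL_add_right hz') (ihzl i).2
    · rcases isR_add.1 ht with ⟨s, hs, rfl⟩ | ⟨z', hz', rfl⟩
      · rcases isR_add.1 hs with ⟨x', hx', rfl⟩ | ⟨y', hy', rfl⟩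
        · obtain ⟨j, rfl⟩ := isR_mk_iff.1 hx'
          exact rf_helper (isR_add_left hx') (ihxr j _ _).2
        · obtain ⟨j, rfl⟩ := isR_mk_iff.1 hy'
          exact rf_helper (isR_add_right (isR_add_left hy')) (ihyr j _).2
      · obtain ⟨j, rfl⟩ := isR_mk_iff.1 hz'
        exact rf_helper (isR_add_right (isR_add_right hz')) (ihzr j).2

theorem pg_zero_add_aux (x : PGame.{u}) : 0 + x ≤ x ∧ x ≤ 0 + x := by
  induction x with
  | mk xl xr xL xR ihl ihr =>
  constructor
  · rw [pg_le_iff]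
    refine ⟨fun t ht => ?_, fun t ht => ?_⟩
    · rcases isL_add.1 ht with ⟨a, ha, rfl⟩ | ⟨x', hx', rfl⟩
      · exact absurd ha not_isL_zero
      · obtain ⟨i, rfl⟩ := isL_mk_iff.1 hx'
        exact lf_helper hx' (ihl i).1
    · obtain ⟨j, rfl⟩ := isR_mk_iff.1 ht
      exact rf_helper (isR_add_right ht) (ihr j).1
  · rw [pg_le_iff]
    refine ⟨fun t ht => ?_, fun t ht => ?_⟩
    · obtain ⟨i, rfl⟩ := isL_mk_iff.1 ht
      exact lf_helper (isL_add_right ht) (ihl i).2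
    · rcases isR_add.1 ht with ⟨a, ha, rfl⟩ | ⟨x', hx', rfl⟩
      · exact absurd ha not_isR_zero
      · obtain ⟨j, rfl⟩ := isR_mk_iff.1 hx'
        exact rf_helper hx' (ihr j).2

theorem neg_mk {l r : Type u} {L : l → PGame.{u}} {R : r → PGame.{u}} :
    -(PGame.mk l r L R) = PGame.mk r l (fun j => -(R j)) (fun i => -(L i)) := rfl

theorem isL_neg_of {x' x : PGame.{u}} (h : IsR x' x) : IsL (-x') (-x) := by
  cases x with
  | mk xl xr xL xR =>
  obtain ⟨j, rfl⟩ := isR_mk_iff.1 h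
  rw [neg_mk]
  exact isL_mk_iff.2 ⟨j, rfl⟩

theorem isR_neg_of {x' x : PGame.{u}} (h : IsL x' x) : IsR (-x') (-x) := by
  cases x with
  | mk xl xr xL xR =>
  obtain ⟨i, rfl⟩ := isL_mk_iff.1 h
  rw [neg_mk]
  exact isR_mk_iff.2 ⟨i, rfl⟩

theorem isL_neg {z x : PGame.{u}} (h : IsL z (-x)) : ∃ x', IsR x' x ∧ z = -x' := by
  cases x with
  | mk xl xr xL xR =>
  rw [neg_mk] at h
  obtain ⟨j, rfl⟩ := isL_mk_iff.1 h
  exact ⟨_, isR_of j, rfl⟩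

theorem isR_neg {z x : PGame.{u}} (h : IsR z (-x)) : ∃ x', IsL x' x ∧ z = -x' := by
  cases x with
  | mk xl xr xL xR =>
  rw [neg_mk] at h
  obtain ⟨i, rfl⟩ := isR_mk_iff.1 h
  exact ⟨_, isL_of i, rfl⟩

theorem pg_neg_add_cancel_aux (x : PGame.{u}) : -x + x ≤ 0 ∧ 0 ≤ -x + x := by
  induction x with
  | mk xl xr xL xR ihl ihr =>
  constructor
  · rw [pg_le_iff]
    refine ⟨fun t ht => ?_, fun t ht => absurd ht not_isR_zero⟩
    rcases isL_add.1 ht with ⟨a, ha, rfl⟩ | ⟨x', hx', rfl⟩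
    · obtain ⟨x', hx', rfl⟩ := isL_neg ha
      obtain ⟨j, rfl⟩ := isR_mk_iff.1 hx'
      exact rf_helper (isR_add_right hx') (ihr j).1
    · obtain ⟨i, rfl⟩ := isL_mk_iff.1 hx'
      exact rf_helper (isR_add_left (isR_neg_of hx')) (ihl i).1
  · rw [pg_le_iff]
    refine ⟨fun t ht => absurd ht not_isL_zero, fun t ht => ?_⟩
    rcases isR_add.1 ht with ⟨a, ha, rfl⟩ | ⟨x', hx', rfl⟩
    · obtain ⟨x', hx', rfl⟩ := isR_neg ha
      obtain ⟨i, rfl⟩ := isL_mk_iff.1 hx'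
      exact lf_helper (isL_add_right hx') (ihl i).2
    · obtain ⟨j, rfl⟩ := isR_mk_iff.1 hx'
      exact lf_helper (isL_add_left (isL_neg_of hx')) (ihr j).2

theorem neg_le_neg_aux (x y : PGame.{u}) : (-y ≤ -x ↔ x ≤ y) ∧ (-x ≤ -y ↔ y ≤ x) := by
  induction x generalizing y with
  | mk xl xr xL xR ihxl ihxr =>
  induction y with
  | mk yl yr yL yR ihyl ihyr =>
  constructor
  · rw [neg_mk, neg_mk, pg_le_mk, pg_le_mk]
    exact and_comm.trans (and_congr (forall_congr' fun i => not_congr (ihxl i (PGame.mk yl yr yL yR)).2)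
      (forall_congr' fun j => not_congr (ihyr j).2))
  · rw [neg_mk, neg_mk, pg_le_mk, pg_le_mk]
    exact and_comm.trans (and_congr (forall_congr' fun j => not_congr (ihyl j).1)
      (forall_congr' fun i => not_congr (ihxr i (PGame.mk yl yr yL yR)).1))

instance pgSetoid : Setoid PGame.{u} :=
  ⟨fun x y => x ≤ y ∧ y ≤ x,
    ⟨fun x => ⟨pg_le_refl x, pg_le_refl x⟩, fun h => ⟨h.2, h.1⟩,
      fun h1 h2 => ⟨pg_le_trans h1.1 h2.1, pg_le_trans h2.2 h1.2⟩⟩⟩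

theorem eqv_iff {x y : PGame.{u}} : x ≈ y ↔ x ≤ y ∧ y ≤ x := Iff.rfl

theorem equiv_refl (x : PGame.{u}) : x ≈ x := eqv_iff.2 ⟨pg_le_refl x, pg_le_refl x⟩

theorem lf_congr {a b c d : PGame.{u}} (h1 : a ≈ b) (h2 : c ≈ d) : a ⧏ c ↔ b ⧏ d := by
  have e1 := eqv_iff.1 h1
  have e2 := eqv_iff.1 h2
  exact not_congr ⟨fun h => pg_le_trans (pg_le_trans e2.2 h) e1.1,
    fun h => pg_le_trans (pg_le_trans e2.1 h) e1.2⟩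

theorem pg_add_congr {a b c d : PGame.{u}} (h1 : a ≈ b) (h2 : c ≈ d) : a + c ≈ b + d := by
  have e1 := eqv_iff.1 h1
  have e2 := eqv_iff.1 h2
  exact eqv_iff.2 ⟨pg_le_trans (pg_add_le_add_right c e1.1) (pg_add_le_add_left b e2.1),
    pg_le_trans (pg_add_le_add_right d e1.2) (pg_add_le_add_left a e2.2)⟩

theorem pg_neg_congr {a b : PGame.{u}} (h : a ≈ b) : -a ≈ -b := by
  have e := eqv_iff.1 h
  exact eqv_iff.2 ⟨(neg_le_neg_aux b a).1.2 e.2, (neg_le_neg_aux a b).1.2 e.1⟩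

abbrev Game : Type (u + 1) := Quotient (pgSetoid : Setoid PGame.{u})

instance : Zero Game.{u} := ⟨⟦0⟧⟩

instance : Add Game.{u} := ⟨Quotient.map₂ (· + ·) fun _ _ h _ _ h' => pg_add_congr h h'⟩

instance : Neg Game.{u} := ⟨Quotient.map (fun x => -x) fun _ _ h => pg_neg_congr h⟩

@[simp]
theorem quot_zero : (⟦0⟧ : Game.{u}) = 0 := rfl

@[simp]
theorem quot_add (x y : PGame.{u}) : (⟦x + y⟧ : Game.{u}) = ⟦x⟧ + ⟦y⟧ := rfl

theorem equiv_iff_game_eq {x y : PGame.{u}} : x ≈ y ↔ (⟦x⟧ : Game.{u}) = ⟦y⟧ :=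
  ⟨fun h => Quotient.sound h, fun h => Quotient.exact h⟩

instance : AddCommGroup Game.{u} where
  add_assoc := by
    rintro ⟨a⟩ ⟨b⟩ ⟨c⟩
    exact Quotient.sound (eqv_iff.2 (pg_add_assoc_aux a b c))
  zero_add := by
    rintro ⟨a⟩
    exact Quotient.sound (eqv_iff.2 (pg_zero_add_aux a))
  add_zero := by
    rintro ⟨a⟩
    exact Quotient.sound (eqv_iff.2 ⟨pg_le_trans (pg_add_comm_le a 0) (pg_zero_add_aux a).1,
      pg_le_trans (pg_zero_add_aux a).2 (pg_add_comm_le 0 a)⟩)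
  add_comm := by
    rintro ⟨a⟩ ⟨b⟩
    exact Quotient.sound (eqv_iff.2 ⟨pg_add_comm_le a b, pg_add_comm_le b a⟩)
  neg_add_cancel := by
    rintro ⟨a⟩
    exact Quotient.sound (eqv_iff.2 (pg_neg_add_cancel_aux a))
  nsmul := nsmulRec
  zsmul := zsmulRec

lemma quot_natUp (n : ℕ) : (⟦natUp n⟧ : Game) = n • (⟦up⟧ : Game) := by
  induction n with
  | zero => simp [natUp]
  | succ n ih => simp [natUp, ih, succ_nsmul]

lemma quot_zUp (z : ℤ) : (⟦zUp z⟧ : Game) = z • (⟦up⟧ : Game) := by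
  unfold zUp
  split
  · rw [quot_natUp]
    rw [← natCast_zsmul]
    congr 1
    omega
  · rw [show (⟦-natUp (-z).toNat⟧ : Game) = -⟦natUp (-z).toNat⟧ from rfl, quot_natUp,
      ← natCast_zsmul, ← neg_zsmul]
    congr 1
    omega

lemma sameOutcome_of_equiv {A B : PGame} (h : A ≈ B) : SameOutcome A B :=
  ⟨lf_congr (equiv_refl 0) h, lf_congr h (equiv_refl 0)⟩

lemma sameOutcome_trans {A B C : PGame} (h1 : SameOutcome A B) (h2 : SameOutcome B C) :
    SameOutcome A C :=
  ⟨h1.1.trans h2.1, h1.2.trans h2.2⟩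

/-- Atomic weights are additive: `AW(G + H) = AW(G) + AW(H)` whenever both atomic
weights exist. -/
theorem atomic_weight_add :
    ∀ (G H : PGame) (a b : ℤ), AtomicWeight G a → AtomicWeight H b →
      AtomicWeight (G + H) (a + b) := by
  intro G H a b hG hH X k hk
  have h1 := hG (H + X) k hk
  have h2 := hH (zUp a + X) k hk
  have e1 : G + H + X + nim k ≈ G + (H + X) + nim k := by
    rw [equiv_iff_game_eq]; simp only [quot_add]; abel
  have e2 : zUp a + (H + X) + nim k ≈ H + (zUp a + X) + nim k := by
    rw [equiv_iff_game_eq]; simp only [quot_add]; abel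
  have e3 : zUp b + (zUp a + X) + nim k ≈ zUp (a + b) + X + nim k := by
    rw [equiv_iff_game_eq]; simp only [quot_add, quot_zUp]
    rw [add_zsmul]; abel
  exact sameOutcome_trans (sameOutcome_of_equiv e1)
    (sameOutcome_trans h1 (sameOutcome_trans (sameOutcome_of_equiv e2)
      (sameOutcome_trans h2 (sameOutcome_of_equiv e3))))

end MixedDeletion
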